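/- arXiv:0801.0385 — 4 statements merged into one kernel-verified Lean document; each statement's English description precedes it below -/
import Mathlib

section
/- The set CD(G) of convolution-dominated matrices on a discrete group G, with the norm ‖A‖₁ = ∑_z sup_{xy⁻¹=z}|A(x,y)|, matrix multiplication, and conjugate-transpose involution, is a Banach *-algebra continuously embedded in the bounded operators on ℓ²(G). -/
open scoped ENNReal
open Filter

/-- The `CD(G)`-norm of a matrix: `‖A‖₁ = ∑_{z} sup_{x y⁻¹ = z} |A(x,y)|`. A matrix
belongs to `CD(G)` iff this is finite. -/
noncomputable def CDnorm {G : Type*} [Group G] (A : G → G → ℂ) : ℝ≥0∞ :=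
  ∑' z : G, ⨆ y : G, (‖A (z * y) y‖₊ : ℝ≥0∞)

/-- Matrix multiplication. -/
noncomputable def matMul {G : Type*} [Group G] (A B : G → G → ℂ) : G → G → ℂ :=
  fun x y => ∑' z : G, A x z * B z y

/-- Conjugate-transpose involution. -/
noncomputable def matStar {G : Type*} [Group G] (A : G → G → ℂ) : G → G → ℂ :=
  fun x y => starRingEnd ℂ (A y x)

open scoped NNReal
set_option linter.unusedSectionVars false
set_option maxHeartbeats 1000000

namespace CDaux
variable {G : Type*} [Group G]

noncomputable def D (A : G → G → ℂ) (z : G) : ℝ≥0∞ := ⨆ y : G, (‖A (z * y) y‖₊ : ℝ≥0∞)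

lemma CDnorm_eq (A : G → G → ℂ) : CDnorm A = ∑' z : G, D A z := rfl

lemma nnnorm_le_D (A : G → G → ℂ) (x y : G) : (‖A x y‖₊ : ℝ≥0∞) ≤ D A (x * y⁻¹) := by
  have : A x y = A (x * y⁻¹ * y) y := by group
  rw [this]; exact le_iSup (fun y' => (‖A (x * y⁻¹ * y') y'‖₊ : ℝ≥0∞)) y

lemma D_le_CDnorm (A : G → G → ℂ) (z : G) : D A z ≤ CDnorm A := ENNReal.le_tsum z

lemma nnnorm_le_CDnorm (A : G → G → ℂ) (x y : G) : (‖A x y‖₊ : ℝ≥0∞) ≤ CDnorm A :=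
  (nnnorm_le_D A x y).trans (D_le_CDnorm A _)

-- subadditivity
lemma cd_add (A B : G → G → ℂ) :
    CDnorm (fun x y => A x y + B x y) ≤ CDnorm A + CDnorm B := by
  rw [CDnorm_eq, CDnorm_eq, CDnorm_eq, ← ENNReal.tsum_add]
  refine ENNReal.tsum_le_tsum fun z => iSup_le fun y => ?_
  unfold D
  calc (‖A (z*y) y + B (z*y) y‖₊ : ℝ≥0∞) ≤ (‖A (z*y) y‖₊ : ℝ≥0∞) + ‖B (z*y) y‖₊ := by
        exact_mod_cast nnnorm_add_le _ _
    _ ≤ (⨆ y' : G, (‖A (z*y') y'‖₊ : ℝ≥0∞)) + ⨆ y' : G, (‖B (z*y') y'‖₊ : ℝ≥0∞) := add_le_add (le_iSup (fun y' => ((‖A (z*y') y'‖₊ : ℝ≥0∞))) y) (le_iSup (fun y' => ((‖B (z*y') y'‖₊ : ℝ≥0∞))) y)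

-- homogeneity
lemma cd_smul (A : G → G → ℂ) (c : ℂ) :
    CDnorm (fun x y => c * A x y) = ‖c‖₊ * CDnorm A := by
  rw [CDnorm_eq, CDnorm_eq, ← ENNReal.tsum_mul_left]
  congr 1; funext z
  unfold D
  rw [ENNReal.mul_iSup]
  congr 1; funext y
  rw [← ENNReal.coe_mul, ← nnnorm_mul]

-- definiteness
lemma cd_zero (A : G → G → ℂ) (h : CDnorm A = 0) : A = fun _ _ => 0 := by
  funext x y
  have h1 : (‖A x y‖₊ : ℝ≥0∞) = 0 := le_antisymm (h ▸ nnnorm_le_CDnorm A x y) bot_le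
  simpa using h1

-- star isometry
lemma cd_star (A : G → G → ℂ) : CDnorm (matStar A) = CDnorm A := by
  have hD : ∀ z : G, D (matStar A) z = D A z⁻¹ := by
    intro z
    unfold D
    refine le_antisymm (iSup_le fun y => ?_) (iSup_le fun y => ?_)
    · have : (‖matStar A (z * y) y‖₊ : ℝ≥0∞) = ‖A (z⁻¹ * (z * y)) (z * y)‖₊ := by
        simp [matStar]
      rw [this]; exact le_iSup (fun w => (‖A (z⁻¹ * w) w‖₊ : ℝ≥0∞)) (z * y)
    · have : (‖A (z⁻¹ * y) y‖₊ : ℝ≥0∞) = ‖matStar A (z * (z⁻¹ * y)) (z⁻¹ * y)‖₊ := by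
        simp [matStar]
      rw [this]; exact le_iSup (fun w => (‖matStar A (z * w) w‖₊ : ℝ≥0∞)) (z⁻¹ * y)
  rw [CDnorm_eq, CDnorm_eq]
  calc ∑' z : G, D (matStar A) z = ∑' z : G, D A z⁻¹ := by simp_rw [hD]
    _ = ∑' z : G, D A z := (Equiv.inv G).tsum_eq (D A)

lemma star_star (A : G → G → ℂ) : matStar (matStar A) = A := by
  funext x y; simp [matStar]

lemma cd_star_mul (A B : G → G → ℂ) :
    matStar (matMul A B) = matMul (matStar B) (matStar A) := by
  funext x y
  simp only [matStar, matMul]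
  calc (starRingEnd ℂ) (∑' z : G, A y z * B z x) = star (∑' z : G, A y z * B z x) := rfl
    _ = ∑' z : G, star (A y z * B z x) := tsum_star
    _ = ∑' z : G, (starRingEnd ℂ) (B z x) * (starRingEnd ℂ) (A y z) :=
        tsum_congr fun z => by rw [StarMul.star_mul]; rfl

lemma enn_nnnorm_tsum_le {ι : Type*} (f : ι → ℂ) :
    (‖∑' i, f i‖₊ : ℝ≥0∞) ≤ ∑' i, (‖f i‖₊ : ℝ≥0∞) := by
  by_cases h : ∑' i, (‖f i‖₊ : ℝ≥0∞) = ⊤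
  · simp [h]
  · have hs : Summable fun i => ‖f i‖₊ := ENNReal.tsum_coe_ne_top_iff_summable.mp h
    have hf : Summable f := Summable.of_nnnorm hs
    rw [← ENNReal.coe_tsum hs]
    exact_mod_cast nnnorm_tsum_le hs

lemma matMul_nnnorm_le (A B : G → G → ℂ) (x y : G) :
    (‖matMul A B x y‖₊ : ℝ≥0∞) ≤ ∑' z : G, D A (x * z⁻¹) * D B (z * y⁻¹) := by
  refine (enn_nnnorm_tsum_le _).trans (ENNReal.tsum_le_tsum fun z => ?_)
  rw [nnnorm_mul, ENNReal.coe_mul]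
  exact mul_le_mul' (nnnorm_le_D A x z) (nnnorm_le_D B z y)

lemma D_matMul_le (A B : G → G → ℂ) (w : G) :
    D (matMul A B) w ≤ ∑' u : G, D A (w * u⁻¹) * D B u := by
  refine iSup_le fun y => (matMul_nnnorm_le A B (w * y) y).trans_eq ?_
  rw [← (Equiv.mulRight y).tsum_eq (fun z => D A (w * y * z⁻¹) * D B (z * y⁻¹))]
  refine tsum_congr fun u => ?_
  have h1 : w * y * (Equiv.mulRight y u)⁻¹ = w * u⁻¹ := by simp [Equiv.mulRight]
  have h2 : (Equiv.mulRight y u) * y⁻¹ = u := by simp [Equiv.mulRight]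
  rw [h1, h2]

lemma cd_mul (A B : G → G → ℂ) :
    CDnorm (matMul A B) ≤ CDnorm A * CDnorm B := by
  calc CDnorm (matMul A B) ≤ ∑' w : G, ∑' u : G, D A (w * u⁻¹) * D B u :=
        ENNReal.tsum_le_tsum (D_matMul_le A B)
    _ = ∑' u : G, ∑' w : G, D A (w * u⁻¹) * D B u := ENNReal.tsum_comm
    _ = ∑' u : G, (∑' w : G, D A (w * u⁻¹)) * D B u := by
        refine tsum_congr fun u => ?_; rw [ENNReal.tsum_mul_right]
    _ = ∑' u : G, CDnorm A * D B u := by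
        refine tsum_congr fun u => ?_
        congr 1
        rw [CDnorm_eq, ← (Equiv.mulRight u⁻¹).tsum_eq (D A)]
        refine tsum_congr fun w => ?_
        simp [Equiv.mulRight]
    _ = CDnorm A * CDnorm B := ENNReal.tsum_mul_left

lemma cd_sub_comm (A B : G → G → ℂ) :
    CDnorm (fun x y => A x y - B x y) = CDnorm (fun x y => B x y - A x y) := by
  unfold CDnorm; congr 1; funext z; congr 1; funext y; rw [← nnnorm_neg, neg_sub]

lemma cd_le_liminf (Fn : ℕ → G → G → ℂ) (L : G → G → ℂ)
    (h : ∀ x y, Tendsto (fun n => Fn n x y) atTop (nhds (L x y))) :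
    CDnorm L ≤ liminf (fun n => CDnorm (Fn n)) atTop := by
  letI : MeasurableSpace G := ⊤
  haveI : MeasurableSingletonClass G := ⟨fun _ => MeasurableSpace.measurableSet_top⟩
  have hnn : ∀ x y, (‖L x y‖₊ : ℝ≥0∞) = liminf (fun n => (‖Fn n x y‖₊ : ℝ≥0∞)) atTop := by
    intro x y
    refine (Filter.Tendsto.liminf_eq ?_).symm
    exact (ENNReal.continuous_coe.tendsto _).comp (((continuous_nnnorm).tendsto _).comp (h x y))
  have hD : ∀ z : G, D L z ≤ liminf (fun n => D (Fn n) z) atTop := by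
    intro z
    refine iSup_le fun y => ?_
    rw [hnn (z*y) y]
    refine Filter.liminf_le_liminf (Eventually.of_forall fun n => ?_)
    exact le_iSup (fun y' => (‖Fn n (z*y') y'‖₊ : ℝ≥0∞)) y
  calc CDnorm L ≤ ∑' z : G, liminf (fun n => D (Fn n) z) atTop :=
        ENNReal.tsum_le_tsum hD
    _ = ∫⁻ z, liminf (fun n => D (Fn n) z) atTop ∂MeasureTheory.Measure.count :=
        (MeasureTheory.lintegral_count _).symm
    _ ≤ liminf (fun n => ∫⁻ z, D (Fn n) z ∂MeasureTheory.Measure.count) atTop :=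
        MeasureTheory.lintegral_liminf_le (fun n s _ => MeasurableSpace.measurableSet_top)
    _ = liminf (fun n => CDnorm (Fn n)) atTop := by
        simp_rw [MeasureTheory.lintegral_count]; rfl

lemma cd_complete (F : ℕ → (G → G → ℂ)) (hfin : ∀ n, CDnorm (F n) < ⊤)
    (hc : ∀ ε : ℝ≥0∞, 0 < ε → ∃ N, ∀ m n, N ≤ m → N ≤ n →
      CDnorm (fun x y => F m x y - F n x y) < ε) :
    ∃ L : G → G → ℂ, CDnorm L < ⊤ ∧
      Tendsto (fun n => CDnorm (fun x y => F n x y - L x y)) atTop (nhds 0) := by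
  have hcauchy : ∀ x y : G, CauchySeq (fun n => F n x y) := by
    intro x y
    rw [Metric.cauchySeq_iff]
    intro ε hε
    obtain ⟨N, hN⟩ := hc (ENNReal.ofReal ε) (ENNReal.ofReal_pos.mpr hε)
    refine ⟨N, fun m hm n hn => ?_⟩
    have h0 := nnnorm_le_CDnorm (fun a b => F m a b - F n a b) x y
    have h1 := h0.trans_lt (hN m n hm hn)
    rw [← enorm_eq_nnnorm, ← ofReal_norm, ENNReal.ofReal_lt_ofReal_iff hε] at h1
    simpa [dist_eq_norm] using h1
  have hex : ∀ x y : G, ∃ l : ℂ, Tendsto (fun n => F n x y) atTop (nhds l) :=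
    fun x y => cauchySeq_tendsto_of_complete (hcauchy x y)
  choose L hL using hex
  have key : ∀ m : ℕ, CDnorm (fun x y => F m x y - L x y) ≤
      liminf (fun n => CDnorm (fun x y => F m x y - F n x y)) atTop := by
    intro m
    exact cd_le_liminf (fun n => fun x y => F m x y - F n x y) _
      (fun x y => Filter.Tendsto.sub tendsto_const_nhds (hL x y))
  have hbound : ∀ ε : ℝ≥0∞, 0 < ε → ∃ N, ∀ m, N ≤ m →
      CDnorm (fun x y => F m x y - L x y) ≤ ε := by
    intro ε hε
    obtain ⟨N, hN⟩ := hc ε hε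
    refine ⟨N, fun m hm => (key m).trans ?_⟩
    refine liminf_le_of_frequently_le ?_
    refine ((eventually_atTop.mpr ⟨N, fun n hn => (hN m n hm hn).le⟩).frequently)
  refine ⟨L, ?_, ?_⟩
  · obtain ⟨N, hN⟩ := hbound 1 one_pos
    have h1 : CDnorm (fun x y => L x y - F N x y) ≤ 1 := by
      rw [cd_sub_comm]; exact hN N le_rfl
    have h2 : CDnorm L ≤ CDnorm (fun x y => L x y - F N x y) + CDnorm (F N) := by
      have := cd_add (fun x y => L x y - F N x y) (F N)
      simpa using this
    exact h2.trans_lt (ENNReal.add_lt_top.mpr ⟨h1.trans_lt ENNReal.one_lt_top, hfin N⟩)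
  · rw [ENNReal.tendsto_atTop_zero]
    intro ε hε
    obtain ⟨N, hN⟩ := hbound ε hε
    exact ⟨N, fun n hn => hN n hn⟩

lemma enn_cauchy_schwarz {ι : Type*} (f h : ι → ℝ≥0∞) :
    (∑' i, f i * h i) ^ 2 ≤ (∑' i, (f i) ^ 2) * (∑' i, (h i) ^ 2) := by
  letI : MeasurableSpace ι := ⊤
  haveI : MeasurableSingletonClass ι := ⟨fun _ => MeasurableSpace.measurableSet_top⟩
  have hmeas : ∀ g : ι → ℝ≥0∞, Measurable g := fun g s _ => MeasurableSpace.measurableSet_top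
  have hconj : Real.HolderConjugate 2 2 := Real.HolderConjugate.two_two
  have key := ENNReal.lintegral_mul_le_Lp_mul_Lq MeasureTheory.Measure.count hconj
    (hmeas f).aemeasurable (hmeas h).aemeasurable
  simp only [Pi.mul_apply, MeasureTheory.lintegral_count] at key
  have hpow : ∀ g : ι → ℝ≥0∞, ∑' i, g i ^ (2:ℝ) = ∑' i, g i ^ 2 := by
    intro g
    refine tsum_congr fun i => ?_
    rw [show (2:ℝ) = ((2:ℕ):ℝ) by norm_num, ENNReal.rpow_natCast]
  rw [hpow, hpow] at key
  calc (∑' i, f i * h i) ^ 2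
      ≤ ((∑' i, f i ^ 2) ^ (1/(2:ℝ)) * (∑' i, h i ^ 2) ^ (1/(2:ℝ))) ^ 2 :=
        pow_le_pow_left' key 2
    _ = (∑' i, (f i) ^ 2) * (∑' i, (h i) ^ 2) := by
        rw [mul_pow]
        congr 1 <;>
        · rw [← ENNReal.rpow_natCast (_ ^ (1/(2:ℝ))) 2, ← ENNReal.rpow_mul]
          norm_num

lemma row_bound (A : G → G → ℂ) (x : G) : ∑' y : G, (‖A x y‖₊ : ℝ≥0∞) ≤ CDnorm A := by
  have e : G ≃ G := (Equiv.inv G).trans (Equiv.mulLeft x)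
  calc ∑' y : G, (‖A x y‖₊ : ℝ≥0∞) ≤ ∑' y : G, D A (x * y⁻¹) :=
        ENNReal.tsum_le_tsum fun y => nnnorm_le_D A x y
    _ = ∑' z : G, D A z := ((Equiv.inv G).trans (Equiv.mulLeft x)).tsum_eq (D A)
    _ = CDnorm A := rfl

lemma col_bound (A : G → G → ℂ) (y : G) : ∑' x : G, (‖A x y‖₊ : ℝ≥0∞) ≤ CDnorm A := by
  calc ∑' x : G, (‖A x y‖₊ : ℝ≥0∞) ≤ ∑' x : G, D A (x * y⁻¹) :=
        ENNReal.tsum_le_tsum fun x => nnnorm_le_D A x y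
    _ = ∑' z : G, D A z := (Equiv.mulRight y⁻¹).tsum_eq (D A)
    _ = CDnorm A := rfl

noncomputable def gbound (A : G → G → ℂ) (c : G → ℂ) (x : G) : ℝ≥0∞ :=
  ∑' y : G, (‖A x y‖₊ : ℝ≥0∞) * ‖c y‖₊

lemma Tfun_nnnorm_le (A : G → G → ℂ) (c : G → ℂ) (x : G) :
    (‖∑' y : G, A x y * c y‖₊ : ℝ≥0∞) ≤ gbound A c x := by
  refine (enn_nnnorm_tsum_le _).trans_eq (tsum_congr fun y => ?_)
  rw [nnnorm_mul, ENNReal.coe_mul]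

lemma gbound_sq_le (A : G → G → ℂ) (c : G → ℂ) (x : G) :
    gbound A c x ^ 2 ≤ CDnorm A * ∑' y : G, (‖A x y‖₊ : ℝ≥0∞) * (‖c y‖₊ : ℝ≥0∞) ^ 2 := by
  have hsplit : ∀ y : G, (‖A x y‖₊ : ℝ≥0∞) * ‖c y‖₊ =
      ((‖A x y‖₊ : ℝ≥0∞) ^ (1/(2:ℝ))) * (((‖A x y‖₊ : ℝ≥0∞) ^ (1/(2:ℝ))) * ‖c y‖₊) := by
    intro y
    rw [← mul_assoc, ← ENNReal.rpow_add_of_nonneg _ _ (by norm_num) (by norm_num)]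
    norm_num
  have hcs := enn_cauchy_schwarz (fun y : G => (‖A x y‖₊ : ℝ≥0∞) ^ (1/(2:ℝ)))
    (fun y : G => ((‖A x y‖₊ : ℝ≥0∞) ^ (1/(2:ℝ))) * ‖c y‖₊)
  have hrw1 : ∀ y : G, ((‖A x y‖₊ : ℝ≥0∞) ^ (1/(2:ℝ))) ^ 2 = (‖A x y‖₊ : ℝ≥0∞) := by
    intro y
    rw [← ENNReal.rpow_natCast (_ ^ (1/(2:ℝ))) 2, ← ENNReal.rpow_mul]
    norm_num
  calc gbound A c x ^ 2
      = (∑' y : G, ((‖A x y‖₊ : ℝ≥0∞) ^ (1/(2:ℝ))) *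
          (((‖A x y‖₊ : ℝ≥0∞) ^ (1/(2:ℝ))) * ‖c y‖₊)) ^ 2 := by
        unfold gbound; rw [tsum_congr hsplit]
    _ ≤ (∑' y : G, ((‖A x y‖₊ : ℝ≥0∞) ^ (1/(2:ℝ))) ^ 2) *
          (∑' y : G, (((‖A x y‖₊ : ℝ≥0∞) ^ (1/(2:ℝ))) * ‖c y‖₊) ^ 2) := hcs
    _ ≤ CDnorm A * ∑' y : G, (‖A x y‖₊ : ℝ≥0∞) * (‖c y‖₊ : ℝ≥0∞) ^ 2 := by
        refine mul_le_mul' ?_ ?_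
        · rw [tsum_congr hrw1]; exact row_bound A x
        · refine le_of_eq (tsum_congr fun y => ?_)
          rw [mul_pow, hrw1 y]

lemma sum_sq_le (A : G → G → ℂ) (c : G → ℂ) :
    ∑' x : G, gbound A c x ^ 2 ≤ CDnorm A ^ 2 * ∑' y : G, (‖c y‖₊ : ℝ≥0∞) ^ 2 := by
  calc ∑' x : G, gbound A c x ^ 2
      ≤ ∑' x : G, CDnorm A * ∑' y : G, (‖A x y‖₊ : ℝ≥0∞) * (‖c y‖₊ : ℝ≥0∞) ^ 2 :=
        ENNReal.tsum_le_tsum (gbound_sq_le A c)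
    _ = CDnorm A * ∑' x : G, ∑' y : G, (‖A x y‖₊ : ℝ≥0∞) * (‖c y‖₊ : ℝ≥0∞) ^ 2 :=
        ENNReal.tsum_mul_left
    _ = CDnorm A * ∑' y : G, (∑' x : G, (‖A x y‖₊ : ℝ≥0∞)) * (‖c y‖₊ : ℝ≥0∞) ^ 2 := by
        rw [ENNReal.tsum_comm]
        congr 1
        exact tsum_congr fun y => ENNReal.tsum_mul_right.symm ▸ ENNReal.tsum_mul_right
    _ ≤ CDnorm A * ∑' y : G, CDnorm A * (‖c y‖₊ : ℝ≥0∞) ^ 2 := by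
        refine mul_le_mul' le_rfl (ENNReal.tsum_le_tsum fun y => ?_)
        exact mul_le_mul' (col_bound A y) le_rfl
    _ = CDnorm A ^ 2 * ∑' y : G, (‖c y‖₊ : ℝ≥0∞) ^ 2 := by
        rw [ENNReal.tsum_mul_left, ← mul_assoc, sq]

lemma lp_sum_sq (f : lp (fun _ : G => ℂ) 2) :
    ∑' x : G, (‖f x‖₊ : ℝ≥0∞) ^ 2 = ENNReal.ofReal (‖f‖ ^ 2) := by
  have h0 : (0:ℝ) < (2:ℝ≥0∞).toReal := by norm_num
  have hs : Summable fun x : G => ‖f x‖ ^ (2:ℝ≥0∞).toReal := (lp.memℓp f).summable h0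
  have hnorm := lp.norm_rpow_eq_tsum h0 f
  have htr : (2:ℝ≥0∞).toReal = ((2:ℕ):ℝ) := by norm_num
  rw [htr] at hnorm hs
  simp_rw [Real.rpow_natCast] at hnorm hs
  rw [show ‖f‖ ^ 2 = ∑' x : G, ‖f x‖ ^ 2 from by exact_mod_cast hnorm,
    ENNReal.ofReal_tsum_of_nonneg (fun x => by positivity) hs]
  refine tsum_congr fun x => ?_
  rw [ENNReal.ofReal_pow (norm_nonneg _), ofReal_norm, enorm_eq_nnnorm]

lemma gbound_lt_top {A : G → G → ℂ} (hA : CDnorm A ≠ ⊤) (c : lp (fun _ : G => ℂ) 2)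
    (x : G) : gbound A (⇑c) x ≠ ⊤ := by
  have hb : ∀ y : G, (‖c y‖₊ : ℝ≥0∞) ≤ ENNReal.ofReal ‖c‖ := by
    intro y
    rw [← enorm_eq_nnnorm, ← ofReal_norm]
    exact ENNReal.ofReal_le_ofReal (lp.norm_apply_le_norm two_ne_zero c y)
  have : gbound A (⇑c) x ≤ (∑' y : G, (‖A x y‖₊ : ℝ≥0∞)) * ENNReal.ofReal ‖c‖ := by
    rw [← ENNReal.tsum_mul_right]
    exact ENNReal.tsum_le_tsum fun y => mul_le_mul' le_rfl (hb y)
  refine ne_top_of_le_ne_top ?_ this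
  exact ENNReal.mul_ne_top (ne_top_of_le_ne_top hA (row_bound A x)) ENNReal.ofReal_ne_top

lemma summable_row {A : G → G → ℂ} (hA : CDnorm A ≠ ⊤) (c : lp (fun _ : G => ℂ) 2)
    (x : G) : Summable fun y : G => A x y * c y := by
  refine Summable.of_nnnorm (ENNReal.tsum_coe_ne_top_iff_summable.mp ?_)
  have : ∑' y : G, ((‖A x y * c y‖₊ : ℝ≥0∞)) = gbound A (⇑c) x := by
    refine tsum_congr fun y => ?_
    rw [nnnorm_mul, ENNReal.coe_mul]
  rw [this]
  exact gbound_lt_top hA c x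

lemma sumsq_T_le {A : G → G → ℂ} (c : lp (fun _ : G => ℂ) 2) :
    ∑' x : G, (‖∑' y : G, A x y * c y‖₊ : ℝ≥0∞) ^ 2 ≤
      CDnorm A ^ 2 * ENNReal.ofReal (‖c‖ ^ 2) := by
  calc ∑' x : G, (‖∑' y : G, A x y * c y‖₊ : ℝ≥0∞) ^ 2
      ≤ ∑' x : G, gbound A (⇑c) x ^ 2 :=
        ENNReal.tsum_le_tsum fun x => pow_le_pow_left' (Tfun_nnnorm_le A (⇑c) x) 2
    _ ≤ CDnorm A ^ 2 * ∑' y : G, (‖c y‖₊ : ℝ≥0∞) ^ 2 := sum_sq_le A (⇑c)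
    _ = CDnorm A ^ 2 * ENNReal.ofReal (‖c‖ ^ 2) := by rw [lp_sum_sq]

lemma memℓp_T {A : G → G → ℂ} (hA : CDnorm A ≠ ⊤) (c : lp (fun _ : G => ℂ) 2) :
    Memℓp (fun x : G => ∑' y : G, A x y * c y) 2 := by
  apply memℓp_gen
  have htr : (2:ℝ≥0∞).toReal = ((2:ℕ):ℝ) := by norm_num
  rw [htr]
  simp_rw [Real.rpow_natCast]
  have hfin : ∑' x : G, (‖∑' y : G, A x y * c y‖₊ : ℝ≥0∞) ^ 2 ≠ ⊤ :=
    ne_top_of_le_ne_top (ENNReal.mul_ne_top (ENNReal.pow_ne_top hA) ENNReal.ofReal_ne_top)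
      (sumsq_T_le c)
  have h2 : Summable fun x : G => ‖∑' y : G, A x y * c y‖₊ ^ 2 := by
    refine ENNReal.tsum_coe_ne_top_iff_summable.mp ?_
    simpa [ENNReal.coe_pow] using hfin
  have h3 : Summable fun x : G => ((‖∑' y : G, A x y * c y‖₊ ^ 2 : ℝ≥0) : ℝ) :=
    NNReal.summable_coe.mpr h2
  simpa [NNReal.coe_pow] using h3

lemma enn_sqrt_le {a b : ℝ≥0∞} (h : a ^ 2 ≤ b ^ 2) : a ≤ b := by
  by_contra hc
  push_neg at hc
  exact absurd h (not_le.mpr (ENNReal.pow_lt_pow_left two_ne_zero hc))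

noncomputable def TL {A : G → G → ℂ} (hA : CDnorm A ≠ ⊤) :
    lp (fun _ : G => ℂ) 2 →ₗ[ℂ] lp (fun _ : G => ℂ) 2 where
  toFun c := ⟨fun x => ∑' y : G, A x y * c y, memℓp_T hA c⟩
  map_add' c d := by
    refine lp.ext (funext fun x => ?_)
    have h1 := summable_row hA c x
    have h2 := summable_row hA d x
    have hcd : ∀ y : G, A x y * (c + d : lp (fun _ : G => ℂ) 2) y
        = A x y * c y + A x y * d y := by
      intro y
      rw [lp.coeFn_add, Pi.add_apply, mul_add]
    calc (∑' y : G, A x y * (c + d : lp (fun _ : G => ℂ) 2) y)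
        = ∑' y : G, (A x y * c y + A x y * d y) := tsum_congr hcd
      _ = (∑' y : G, A x y * c y) + ∑' y : G, A x y * d y := Summable.tsum_add h1 h2
  map_smul' k c := by
    refine lp.ext (funext fun x => ?_)
    have hkc : ∀ y : G, A x y * (k • c : lp (fun _ : G => ℂ) 2) y
        = k * (A x y * c y) := by
      intro y
      rw [lp.coeFn_smul, Pi.smul_apply, smul_eq_mul]; ring
    calc (∑' y : G, A x y * (k • c : lp (fun _ : G => ℂ) 2) y)
        = ∑' y : G, k * (A x y * c y) := tsum_congr hkc
      _ = k * ∑' y : G, A x y * c y := tsum_mul_left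

lemma TL_norm_le {A : G → G → ℂ} (hA : CDnorm A ≠ ⊤) (c : lp (fun _ : G => ℂ) 2) :
    ‖TL hA c‖ ≤ (CDnorm A).toReal * ‖c‖ := by
  set Tc := TL hA c with hTc
  have hcoe : ∀ x : G, (Tc : G → ℂ) x = ∑' y : G, A x y * c y := fun x => rfl
  have hsq : ENNReal.ofReal (‖Tc‖ ^ 2) ≤ (CDnorm A * ENNReal.ofReal ‖c‖) ^ 2 := by
    rw [← lp_sum_sq Tc]
    calc ∑' x : G, (‖(Tc : G → ℂ) x‖₊ : ℝ≥0∞) ^ 2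
        = ∑' x : G, (‖∑' y : G, A x y * c y‖₊ : ℝ≥0∞) ^ 2 := by
          refine tsum_congr fun x => ?_; rw [hcoe]
      _ ≤ CDnorm A ^ 2 * ENNReal.ofReal (‖c‖ ^ 2) := sumsq_T_le c
      _ = (CDnorm A * ENNReal.ofReal ‖c‖) ^ 2 := by
          rw [mul_pow, ENNReal.ofReal_pow (norm_nonneg _)]
  have hx : ENNReal.ofReal ‖Tc‖ ≤ CDnorm A * ENNReal.ofReal ‖c‖ := by
    refine enn_sqrt_le ?_
    rwa [← ENNReal.ofReal_pow (norm_nonneg _)]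
  have hne : CDnorm A * ENNReal.ofReal ‖c‖ ≠ ⊤ :=
    ENNReal.mul_ne_top hA ENNReal.ofReal_ne_top
  calc ‖Tc‖ = (ENNReal.ofReal ‖Tc‖).toReal := (ENNReal.toReal_ofReal (norm_nonneg _)).symm
    _ ≤ (CDnorm A * ENNReal.ofReal ‖c‖).toReal := ENNReal.toReal_mono hne hx
    _ = (CDnorm A).toReal * ‖c‖ := by
        rw [ENNReal.toReal_mul, ENNReal.toReal_ofReal (norm_nonneg _)]

lemma cd_embed (A : G → G → ℂ) (hA : CDnorm A < ⊤) :
    ∃ T : lp (fun _ : G => ℂ) 2 →L[ℂ] lp (fun _ : G => ℂ) 2,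
      (∀ (c : lp (fun _ : G => ℂ) 2) (x : G), T c x = ∑' y : G, A x y * c y) ∧
      (‖T‖₊ : ℝ≥0∞) ≤ CDnorm A := by
  have hA' : CDnorm A ≠ ⊤ := hA.ne
  refine ⟨(TL hA').mkContinuous (CDnorm A).toReal (TL_norm_le hA'), fun c x => rfl, ?_⟩
  have hle : ‖(TL hA').mkContinuous (CDnorm A).toReal (TL_norm_le hA')‖ ≤ (CDnorm A).toReal :=
    LinearMap.mkContinuous_norm_le _ ENNReal.toReal_nonneg _
  calc (‖(TL hA').mkContinuous (CDnorm A).toReal (TL_norm_le hA')‖₊ : ℝ≥0∞)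
      = ENNReal.ofReal ‖(TL hA').mkContinuous (CDnorm A).toReal (TL_norm_le hA')‖ :=
        by rw [ofReal_norm, enorm_eq_nnnorm]
    _ ≤ ENNReal.ofReal (CDnorm A).toReal := ENNReal.ofReal_le_ofReal hle
    _ ≤ CDnorm A := ENNReal.ofReal_toReal_le

end CDaux

/-- `CD(G)` with the norm `‖A‖₁`, matrix multiplication and the
conjugate-transpose involution is a Banach `*`-algebra continuously embedded into
`B(ℓ²(G))`: the norm is subadditive, homogeneous and submultiplicative, the involution is
an isometric conjugate-linear anti-automorphism, the norm is complete, and each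
`A ∈ CD(G)` induces a bounded operator on `ℓ²(G)` with operator norm `≤ ‖A‖₁`. -/
theorem CD_is_Banach_star_algebra {G : Type*} [Group G] :
    -- norm axioms
    (∀ A B : G → G → ℂ, CDnorm (fun x y => A x y + B x y) ≤ CDnorm A + CDnorm B) ∧
    (∀ (A : G → G → ℂ) (c : ℂ), CDnorm (fun x y => c * A x y) = ‖c‖₊ * CDnorm A) ∧
    (∀ A : G → G → ℂ, CDnorm A = 0 → A = fun _ _ => 0) ∧
    -- submultiplicativity
    (∀ A B : G → G → ℂ, CDnorm A < ⊤ → CDnorm B < ⊤ →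
      CDnorm (matMul A B) ≤ CDnorm A * CDnorm B) ∧
    -- isometric involution, compatible with products
    (∀ A : G → G → ℂ, CDnorm (matStar A) = CDnorm A) ∧
    (∀ A : G → G → ℂ, matStar (matStar A) = A) ∧
    (∀ A B : G → G → ℂ, CDnorm A < ⊤ → CDnorm B < ⊤ →
      matStar (matMul A B) = matMul (matStar B) (matStar A)) ∧
    -- completeness of CD(G)
    (∀ F : ℕ → (G → G → ℂ), (∀ n, CDnorm (F n) < ⊤) →
      (∀ ε : ℝ≥0∞, 0 < ε → ∃ N, ∀ m n, N ≤ m → N ≤ n →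
        CDnorm (fun x y => F m x y - F n x y) < ε) →
      ∃ L : G → G → ℂ, CDnorm L < ⊤ ∧
        Tendsto (fun n => CDnorm (fun x y => F n x y - L x y)) atTop (nhds 0)) ∧
    -- continuous embedding into B(ℓ²(G))
    (∀ A : G → G → ℂ, CDnorm A < ⊤ →
      ∃ T : lp (fun _ : G => ℂ) 2 →L[ℂ] lp (fun _ : G => ℂ) 2,
        (∀ (c : lp (fun _ : G => ℂ) 2) (x : G), T c x = ∑' y : G, A x y * c y) ∧
        (‖T‖₊ : ℝ≥0∞) ≤ CDnorm A) :=
  ⟨CDaux.cd_add, CDaux.cd_smul, CDaux.cd_zero,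
   fun A B _ _ => CDaux.cd_mul A B, CDaux.cd_star, CDaux.star_star,
   fun A B _ _ => CDaux.cd_star_mul A B, CDaux.cd_complete, CDaux.cd_embed⟩
end

section
/- The map R sending f = ∑_z m_z δ_z ∈ ℓ¹(G, ℓ^∞(G), T) to the operator ∑_z D^{m_z}_z is an isometric *-isomorphism from the twisted L¹-algebra ℓ¹(G, ℓ^∞(G), T) onto CD(G). -/
open scoped ENNReal

/-- Norm of the twisted algebra `ℓ¹(G, ℓ^∞(G), T)`: `‖f‖ = ∑_x ‖f(x)‖_∞`. -/
noncomputable def L1norm {G : Type*} [Group G] (f : G → G → ℂ) : ℝ≥0∞ :=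
  ∑' x : G, ⨆ z : G, (‖f x z‖₊ : ℝ≥0∞)

/-- Twisted convolution `(h ⋆ f)(x) = ∑_y T_y h(xy) · f(y⁻¹)`, i.e.
`(h ⋆ f)(x)(z) = ∑_y h(xy)(y⁻¹z) f(y⁻¹)(z)`. -/
noncomputable def tconv {G : Type*} [Group G] (h f : G → G → ℂ) : G → G → ℂ :=
  fun x z => ∑' y : G, h (x * y) (y⁻¹ * z) * f y⁻¹ z

/-- Twisted involution `f*(x) = conj (T_{x⁻¹} f(x⁻¹))`, i.e. `f*(x)(z) = conj (f(x⁻¹)(xz))`. -/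
noncomputable def tstar {G : Type*} [Group G] (f : G → G → ℂ) : G → G → ℂ :=
  fun x z => starRingEnd ℂ (f x⁻¹ (x * z))

/-- The canonical map `R : f = ∑_z m_z δ_z ↦ ∑_z D^{m_z}_z`; the resulting matrix has
entries `(Rf)(x,y) = f(xy⁻¹)(y)`. -/
def Rmat {G : Type*} [Group G] (f : G → G → ℂ) : G → G → ℂ :=
  fun x y => f (x * y⁻¹) y

/-- The map `R` is an isometric `*`-isomorphism from the twisted
`L¹`-algebra `ℓ¹(G, ℓ^∞(G), T)` onto `CD(G)`: it is linear, isometric, multiplicative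
(`R(h ⋆ f) = R(h) R(f)`), `*`-preserving, and surjective onto `CD(G)`. -/
theorem R_isometric_star_isomorphism {G : Type*} [Group G] :
    (∀ (f h : G → G → ℂ) (c : ℂ),
      Rmat (fun x z => c * f x z + h x z) =
        fun x y => c * Rmat f x y + Rmat h x y) ∧
    (∀ f : G → G → ℂ, CDnorm (Rmat f) = L1norm f) ∧
    (∀ f h : G → G → ℂ, L1norm f < ⊤ → L1norm h < ⊤ →
      Rmat (tconv h f) = matMul (Rmat h) (Rmat f)) ∧
    (∀ f : G → G → ℂ, Rmat (tstar f) = matStar (Rmat f)) ∧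
    (∀ A : G → G → ℂ, CDnorm A < ⊤ →
      ∃ f : G → G → ℂ, L1norm f < ⊤ ∧ Rmat f = A) := by
  refine ⟨fun f h c => rfl, fun f => ?_, fun f h _ _ => ?_, fun f => ?_, fun A hA => ?_⟩
  · unfold CDnorm L1norm Rmat
    simp
  · funext x y
    unfold Rmat tconv matMul
    rw [show (∑' z : G, h (x * z⁻¹) z * f (z * y⁻¹) y) =
        ∑' w : G, (fun z => h (x * z⁻¹) z * f (z * y⁻¹) y)
          (((Equiv.inv G).trans (Equiv.mulRight y)) w) from
      (Equiv.tsum_eq ((Equiv.inv G).trans (Equiv.mulRight y)) _).symm]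
    refine tsum_congr fun w => ?_
    simp only [Equiv.trans_apply, Equiv.inv_apply, Equiv.coe_mulRight]
    group
  · funext x y
    unfold Rmat tstar matStar
    group
  · refine ⟨fun x z => A (x * z) z, ?_, ?_⟩
    · unfold L1norm
      exact hA
    · funext x y
      simp [Rmat]
end

section
/- The map Q : f = ∑_v δ_v ⊗ m_v ↦ ∑_v δ_v ⊗ D^{m_v}_v is an isometric *-homomorphism from the twisted L¹-algebra ℓ¹(G, ℓ^∞(G), T) into the projective tensor product ℓ¹(G) ⊗̂ B(ℓ²(G)), where ℓ¹(G) carries convolution. -/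
open scoped ENNReal

open scoped ENNReal NNReal

set_option maxHeartbeats 1000000

section Aux

variable {G : Type*} [Group G]

lemma lp_two_toReal : ((2 : ℝ≥0∞).toReal) = 2 := by norm_num

/-- Evaluation at a point as a continuous linear map on `ℓ²(G)`. -/
noncomputable def evalCLM (x : G) : lp (fun _ : G => ℂ) 2 →L[ℂ] ℂ :=
  LinearMap.mkContinuous
    { toFun := fun ξ => ξ x
      map_add' := fun ξ η => by simp [lp.coeFn_add]
      map_smul' := fun c ξ => by simp [lp.coeFn_smul] }
    1 (fun ξ => by
      show ‖ξ x‖ ≤ 1 * ‖ξ‖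
      simpa using lp.norm_apply_le_norm (by norm_num : (2:ℝ≥0∞) ≠ 0) ξ x)

lemma evalCLM_apply (x : G) (ξ : lp (fun _ : G => ℂ) 2) : evalCLM x ξ = ξ x := rfl

lemma opNNNorm_side_diag (m : G → ℂ) (v : G)
    (T : lp (fun _ : G => ℂ) 2 →L[ℂ] lp (fun _ : G => ℂ) 2)
    (hT : ∀ (ξ : lp (fun _ : G => ℂ) 2) (x : G), T ξ x = m (v⁻¹ * x) * ξ (v⁻¹ * x)) :
    (‖T‖₊ : ℝ≥0∞) = ⨆ z : G, (‖m z‖₊ : ℝ≥0∞) := by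
  classical
  have h2 : (0:ℝ) < (2 : ℝ≥0∞).toReal := by norm_num
  have h2' : (2:ℝ≥0∞) ≠ 0 := by norm_num
  apply le_antisymm
  · by_cases hsup : (⨆ z : G, (‖m z‖₊ : ℝ≥0∞)) = ⊤
    · simp [hsup]
    set c : ℝ≥0 := (⨆ z : G, (‖m z‖₊ : ℝ≥0∞)).toNNReal with hc
    have hcoe : (c : ℝ≥0∞) = ⨆ z : G, (‖m z‖₊ : ℝ≥0∞) := ENNReal.coe_toNNReal hsup
    have hle : ∀ z, ‖m z‖ ≤ (c:ℝ) := by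
      intro z
      have : (‖m z‖₊ : ℝ≥0∞) ≤ (c : ℝ≥0∞) := by rw [hcoe]; exact le_iSup (fun z : G => (‖m z‖₊ : ℝ≥0∞)) z
      exact_mod_cast this
    have hc0 : (0:ℝ) ≤ c := c.coe_nonneg
    have hnorm : ‖T‖ ≤ (c:ℝ) := by
      apply ContinuousLinearMap.opNorm_le_bound _ hc0
      intro ξ
      have hsummable : Summable (fun y : G => ‖ξ y‖ ^ (2:ℝ)) := by
        simpa [lp_two_toReal] using (lp.memℓp ξ).summable h2
      have hsum2 : Summable (fun x : G => ‖ξ (v⁻¹ * x)‖ ^ (2:ℝ)) :=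
        (Equiv.mulLeft v⁻¹).summable_iff.mpr hsummable
      have key : ‖T ξ‖ ^ (2:ℝ) ≤ ((c:ℝ) * ‖ξ‖) ^ (2:ℝ) := by
        have h1 : ‖T ξ‖ ^ (2:ℝ) = ∑' x : G, ‖T ξ x‖ ^ (2:ℝ) := by
          simpa [lp_two_toReal] using lp.norm_rpow_eq_tsum (p := 2) h2 (T ξ)
        rw [h1]
        have hterm : ∀ x : G, ‖T ξ x‖ ^ (2:ℝ) ≤ (c:ℝ)^(2:ℝ) * ‖ξ (v⁻¹*x)‖ ^ (2:ℝ) := by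
          intro x
          rw [hT ξ x, ← Real.mul_rpow hc0 (norm_nonneg _)]
          apply Real.rpow_le_rpow (norm_nonneg _) _ (by norm_num)
          rw [norm_mul]
          exact mul_le_mul_of_nonneg_right (hle _) (norm_nonneg _)
        calc ∑' x : G, ‖T ξ x‖ ^ (2:ℝ)
            ≤ ∑' x : G, (c:ℝ)^(2:ℝ) * ‖ξ (v⁻¹*x)‖ ^ (2:ℝ) := by
              apply Summable.tsum_le_tsum hterm _ (hsum2.mul_left _)
              · apply Summable.of_nonneg_of_le (fun x => Real.rpow_nonneg (norm_nonneg _) _)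
                  hterm (hsum2.mul_left _)
          _ = (c:ℝ)^(2:ℝ) * ∑' x : G, ‖ξ (v⁻¹*x)‖ ^ (2:ℝ) := tsum_mul_left
          _ = (c:ℝ)^(2:ℝ) * ∑' y : G, ‖ξ y‖ ^ (2:ℝ) := by
              congr 1
              exact (Equiv.mulLeft v⁻¹).tsum_eq (fun y => ‖ξ y‖ ^ (2:ℝ))
          _ = (c:ℝ)^(2:ℝ) * ‖ξ‖ ^ (2:ℝ) := by
              congr 1
              simpa [lp_two_toReal] using (lp.norm_rpow_eq_tsum (p := 2) h2 ξ).symm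
          _ = ((c:ℝ) * ‖ξ‖) ^ (2:ℝ) := (Real.mul_rpow hc0 (norm_nonneg _)).symm
      exact (Real.rpow_le_rpow_iff (norm_nonneg _)
        (mul_nonneg hc0 (norm_nonneg _)) (by norm_num)).mp key
    rw [← hcoe]
    exact_mod_cast hnorm
  · apply iSup_le
    intro z
    rw [ENNReal.coe_le_coe]
    have hx : ‖(lp.single 2 z (1:ℂ) : lp (fun _ : G => ℂ) 2)‖ = 1 := by
      simpa using lp.norm_single (p := 2) h2 (fun _ : G => (1:ℂ)) z
    set ξ : lp (fun _ : G => ℂ) 2 := lp.single 2 z (1:ℂ) with hξ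
    have hval : T ξ (v * z) = m z := by
      rw [hT]
      simp [hξ, lp.single_apply_self]
    have h3 : ‖m z‖ ≤ ‖T‖ := by
      calc ‖m z‖ = ‖T ξ (v*z)‖ := by rw [hval]
        _ ≤ ‖T ξ‖ := lp.norm_apply_le_norm h2' (T ξ) (v*z)
        _ ≤ ‖T‖ * ‖ξ‖ := T.le_opNorm ξ
        _ = ‖T‖ := by rw [hξ] at hx ⊢; rw [hx, mul_one]
    exact_mod_cast h3

end Aux

/-- The map `Q : ∑_v δ_v ⊗ m_v ↦ ∑_v δ_v ⊗ D^{m_v}_v` is an isometric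
`*`-homomorphism from the twisted algebra `ℓ¹(G, ℓ^∞(G), T)` into the projective tensor
product `ℓ¹(G) ⊗̂ B(ℓ²(G)) ≅ ℓ¹(G, B(ℓ²(G)))` with convolution multiplication:
if `T v`, `S v`, `W v`, `V v` are the side-diagonal operators `D^{f(v)}_v`, `D^{h(v)}_v`,
`D^{(h⋆f)(v)}_v`, `D^{f*(v)}_v` on `ℓ²(G)`, then `∑_v ‖T v‖ = ‖f‖` (isometry),
`W v = ∑_z S z ∘ T(z⁻¹ v)` (`Q(h ⋆ f) = Q(h) ∗ Q(f)`, the `ℓ¹(G, B)`-convolution),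
and `V v = (T v⁻¹)*` (`Q(f*) = Q(f)*`). -/
theorem Q_isometric_star_homomorphism {G : Type*} [Group G]
    (f h : G → G → ℂ) (hf : L1norm f < ⊤) (hh : L1norm h < ⊤)
    (T S W V : G → (lp (fun _ : G => ℂ) 2 →L[ℂ] lp (fun _ : G => ℂ) 2))
    (hT : ∀ (v : G) (ξ : lp (fun _ : G => ℂ) 2) (x : G),
      T v ξ x = f v (v⁻¹ * x) * ξ (v⁻¹ * x))
    (hS : ∀ (v : G) (ξ : lp (fun _ : G => ℂ) 2) (x : G),
      S v ξ x = h v (v⁻¹ * x) * ξ (v⁻¹ * x))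
    (hW : ∀ (v : G) (ξ : lp (fun _ : G => ℂ) 2) (x : G),
      W v ξ x = tconv h f v (v⁻¹ * x) * ξ (v⁻¹ * x))
    (hV : ∀ (v : G) (ξ : lp (fun _ : G => ℂ) 2) (x : G),
      V v ξ x = tstar f v (v⁻¹ * x) * ξ (v⁻¹ * x)) :
    (∑' v : G, (‖T v‖₊ : ℝ≥0∞)) = L1norm f ∧
    (∀ v : G, W v = ∑' z : G, (S z).comp (T (z⁻¹ * v))) ∧
    (∀ v : G, V v = ContinuousLinearMap.adjoint (T v⁻¹)) := by
  have hTnorm : ∀ w : G, (‖T w‖₊ : ℝ≥0∞) = ⨆ z : G, (‖f w z‖₊ : ℝ≥0∞) :=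
    fun w => opNNNorm_side_diag (f w) w (T w) (hT w)
  have hSnorm : ∀ w : G, (‖S w‖₊ : ℝ≥0∞) = ⨆ z : G, (‖h w z‖₊ : ℝ≥0∞) :=
    fun w => opNNNorm_side_diag (h w) w (S w) (hS w)
  have part1 : (∑' v : G, (‖T v‖₊ : ℝ≥0∞)) = L1norm f := tsum_congr hTnorm
  refine ⟨part1, ?_, ?_⟩
  · -- multiplicativity
    intro v
    set g : G → (lp (fun _ : G => ℂ) 2 →L[ℂ] lp (fun _ : G => ℂ) 2) :=
      fun z => (S z).comp (T (z⁻¹ * v)) with hg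
    have hTb : ∀ w : G, (‖T w‖₊ : ℝ≥0∞) ≤ L1norm f := fun w => by
      rw [hTnorm w]; exact ENNReal.le_tsum w
    have hbound : (∑' z : G, (‖g z‖₊ : ℝ≥0∞)) ≤ L1norm h * L1norm f := by
      calc (∑' z : G, (‖g z‖₊ : ℝ≥0∞))
          ≤ ∑' z : G, (‖S z‖₊ : ℝ≥0∞) * L1norm f := by
            apply ENNReal.tsum_le_tsum
            intro z
            calc ((‖g z‖₊ : ℝ≥0∞)) ≤ (‖S z‖₊ : ℝ≥0∞) * (‖T (z⁻¹ * v)‖₊ : ℝ≥0∞) := by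
                  rw [← ENNReal.coe_mul]
                  exact_mod_cast ContinuousLinearMap.opNNNorm_comp_le (S z) (T (z⁻¹ * v))
              _ ≤ (‖S z‖₊ : ℝ≥0∞) * L1norm f :=
                  mul_le_mul_right (hTb _) _
        _ = (∑' z : G, (‖S z‖₊ : ℝ≥0∞)) * L1norm f := ENNReal.tsum_mul_right
        _ = L1norm h * L1norm f := by exact congrArg (· * L1norm f) (tsum_congr hSnorm)
    have hne : (∑' z : G, (‖g z‖₊ : ℝ≥0∞)) ≠ ⊤ :=
      (lt_of_le_of_lt hbound (ENNReal.mul_lt_top hh hf)).ne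
    have hgsum : Summable g :=
      Summable.of_nnnorm (ENNReal.tsum_coe_ne_top_iff_summable.mp hne)
    have hA : HasSum g (∑' z, g z) := hgsum.hasSum
    refine ContinuousLinearMap.ext fun ξ => lp.ext (funext fun x => ?_)
    -- evaluate the operator tsum
    have h1 : HasSum (fun z => g z ξ) ((∑' z, g z) ξ) :=
      hA.mapL (ContinuousLinearMap.apply ℂ _ ξ)
    have h2 : HasSum (fun z => (g z ξ) x) (((∑' z, g z) ξ) x) := h1.mapL (evalCLM x)
    have hRHS : ((∑' z, g z) ξ) x = ∑' z : G, (g z ξ) x := h2.tsum_eq.symm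
    rw [hW v ξ x, hRHS]
    have hterm : ∀ z : G, (g z ξ) x
        = h z (z⁻¹ * x) * f (z⁻¹ * v) (v⁻¹ * x) * ξ (v⁻¹ * x) := by
      intro z
      have : (g z ξ) x = h z (z⁻¹ * x) * ((T (z⁻¹ * v)) ξ) (z⁻¹ * x) := by
        rw [hg]
        simpa using hS z ((T (z⁻¹ * v)) ξ) x
      rw [this, hT (z⁻¹ * v) ξ (z⁻¹ * x)]
      have e1 : (z⁻¹ * v)⁻¹ * (z⁻¹ * x) = v⁻¹ * x := by group
      rw [e1, mul_assoc]
    rw [tsum_congr hterm]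
    unfold tconv
    rw [← tsum_mul_right]
    calc (∑' y : G, h (v * y) (y⁻¹ * (v⁻¹ * x)) * f y⁻¹ (v⁻¹ * x) * ξ (v⁻¹ * x))
        = ∑' z : G, h (v * (v⁻¹ * z)) ((v⁻¹ * z)⁻¹ * (v⁻¹ * x)) * f (v⁻¹ * z)⁻¹ (v⁻¹ * x)
            * ξ (v⁻¹ * x) := ((Equiv.mulLeft v⁻¹).tsum_eq _).symm
      _ = ∑' z : G, h z (z⁻¹ * x) * f (z⁻¹ * v) (v⁻¹ * x) * ξ (v⁻¹ * x) := by
          apply tsum_congr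
          intro z
          have e2 : v * (v⁻¹ * z) = z := by group
          have e3 : (v⁻¹ * z)⁻¹ * (v⁻¹ * x) = z⁻¹ * x := by group
          have e4 : (v⁻¹ * z)⁻¹ = z⁻¹ * v := by rw [mul_inv_rev, inv_inv]
          rw [e2, e3, e4]
  · -- involutivity
    intro v
    rw [ContinuousLinearMap.eq_adjoint_iff]
    intro ξ η
    rw [lp.inner_eq_tsum, lp.inner_eq_tsum]
    simp only [RCLike.inner_apply']
    refine Eq.trans (tsum_congr ?_) ((Equiv.mulLeft v⁻¹).tsum_eq
      (fun y => (starRingEnd ℂ) (ξ y) * ((T v⁻¹) η) y))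
    intro x
    show (starRingEnd ℂ) ((V v ξ) x) * η x
        = (starRingEnd ℂ) (ξ (v⁻¹ * x)) * ((T v⁻¹) η) (v⁻¹ * x)
    rw [hV v ξ x, hT v⁻¹ η (v⁻¹ * x)]
    unfold tstar
    have e1 : v * (v⁻¹ * x) = x := by group
    have e2 : v⁻¹⁻¹ * (v⁻¹ * x) = x := by group
    rw [e1, e2, map_mul, RingHomCompTriple.comp_apply]
    ring_nf
    simp [Complex.conj_conj]
    ring
end

section
/- The unitary operator S on ℓ²(G × G) defined by (Sξ)(x,z) = ξ(xz, z) intertwines the amplified canonical representation R^ω and the D-regular representation λ^D of the twisted L¹-algebra: λ^D(f) ∘ S = S ∘ R^ω(f) for all f ∈ ℓ¹(G, ℓ^∞(G), T). Consequently ‖λ^D(f)‖ = ‖R(f)‖ for all f. -/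
open scoped ENNReal

lemma lp_norm_sq {ι : Type*} (ξ : lp (fun _ : ι => ℂ) 2) : ‖ξ‖ ^ 2 = ∑' i, ‖ξ i‖ ^ 2 := by
  have h := lp.norm_rpow_eq_tsum (p := 2) (E := fun _ : ι => ℂ) (by norm_num) ξ
  have h2 : (2 : ℝ≥0∞).toReal = ((2 : ℕ) : ℝ) := by norm_num
  rw [h2] at h
  simp_rw [Real.rpow_natCast] at h
  exact_mod_cast h

lemma lp_summable_sq {ι : Type*} (ξ : lp (fun _ : ι => ℂ) 2) :
    Summable fun i => ‖ξ i‖ ^ 2 := by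
  have h := (lp.memℓp ξ).summable (p := 2) (by norm_num)
  have h2 : (2 : ℝ≥0∞).toReal = ((2 : ℕ) : ℝ) := by norm_num
  rw [h2] at h
  simp_rw [Real.rpow_natCast] at h
  exact_mod_cast h

lemma memℓp_two_of_summable {ι : Type*} {g : ι → ℂ} (h : Summable fun i => ‖g i‖ ^ 2) :
    Memℓp g 2 := by
  apply memℓp_gen
  have h2 : (2 : ℝ≥0∞).toReal = ((2 : ℕ) : ℝ) := by norm_num
  rw [h2]
  simp_rw [Real.rpow_natCast]
  exact_mod_cast h

/-- The shear equiv `(x,z) ↦ (xz, z)` on `G × G`. -/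
def shearEquiv (G : Type*) [Group G] : G × G ≃ G × G where
  toFun p := (p.1 * p.2, p.2)
  invFun p := (p.1 * p.2⁻¹, p.2)
  left_inv p := by simp
  right_inv p := by simp

set_option maxHeartbeats 1000000 in
lemma TD_norm_le {G : Type*} [Group G] (f : G → G → ℂ)
    (TD : lp (fun _ : G × G => ℂ) 2 →L[ℂ] lp (fun _ : G × G => ℂ) 2)
    (hTD : ∀ (ξ : lp (fun _ : G × G => ℂ) 2) (x z : G),
      TD ξ (x, z) = ∑' y : G, f (x * y) (y⁻¹ * z) * ξ (y⁻¹, z))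
    (TR : lp (fun _ : G => ℂ) 2 →L[ℂ] lp (fun _ : G => ℂ) 2)
    (hTR : ∀ (c : lp (fun _ : G => ℂ) 2) (x : G),
      TR c x = ∑' y : G, f (x * y⁻¹) y * c y) :
    ‖TD‖ ≤ ‖TR‖ := by
  apply TD.opNorm_le_bound (norm_nonneg TR)
  intro ξ
  obtain ⟨η, hηcoe⟩ : ∃ η : G → lp (fun _ : G => ℂ) 2,
      ∀ z u, (η z : G → ℂ) u = ξ (u * z⁻¹, z) :=
    ⟨fun z => ⟨fun u => ξ (u * z⁻¹, z), memℓp_two_of_summable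
      ((lp_summable_sq ξ).comp_injective (fun a b h => by
        simpa using congrArg Prod.fst h))⟩, fun z u => rfl⟩
  have key : ∀ x z : G, TD ξ (x, z) = TR (η z) (x * z) := by
    intro x z
    rw [hTD, hTR]
    rw [← Equiv.tsum_eq ((Equiv.inv G).trans (Equiv.mulRight z))
      (fun y => f (x * z * y⁻¹) y * (η z : G → ℂ) y)]
    refine tsum_congr fun y => ?_
    simp only [Equiv.trans_apply, Equiv.inv_apply, Equiv.coe_mulRight, hηcoe]
    simp [mul_assoc]
  have hF : Summable fun p : G × G => ‖TR (η p.2) p.1‖ ^ 2 := by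
    rw [← (shearEquiv G).summable_iff]
    refine ((lp_summable_sq (TD ξ)).congr fun p => ?_)
    simp only [shearEquiv, Equiv.coe_fn_mk, Function.comp]
    rw [show TD ξ p = TD ξ (p.1, p.2) from rfl, key]
  have hG : Summable fun p : G × G => ‖ξ (p.1 * p.2⁻¹, p.2)‖ ^ 2 :=
    (lp_summable_sq ξ).comp_injective (shearEquiv G).symm.injective
  have hnη : ∀ z : G, ‖η z‖ ^ 2 = ∑' u : G, ‖ξ (u * z⁻¹, z)‖ ^ 2 := fun z =>
    (lp_norm_sq (η z)).trans (tsum_congr fun u => by rw [hηcoe])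
  have h1 : Summable fun z : G => ∑' x : G, ‖TR (η z) x‖ ^ 2 := by
    have := hF.prod_symm.prod
    simpa using this
  have h1' : Summable fun z : G => ‖TR (η z)‖ ^ 2 :=
    h1.congr fun z => (lp_norm_sq (TR (η z))).symm
  have h2 : Summable fun z : G => ∑' u : G, ‖ξ (u * z⁻¹, z)‖ ^ 2 := by
    have := hG.prod_symm.prod
    simpa using this
  have h2' : Summable fun z : G => ‖η z‖ ^ 2 := h2.congr fun z => (hnη z).symm
  have hnorm : ‖TD ξ‖ ^ 2 ≤ (‖TR‖ * ‖ξ‖) ^ 2 := by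
    rw [lp_norm_sq]
    calc (∑' p : G × G, ‖TD ξ p‖ ^ 2)
        = ∑' p : G × G, ‖TR (η p.2) p.1‖ ^ 2 := by
          rw [← Equiv.tsum_eq (shearEquiv G) (fun p => ‖TR (η p.2) p.1‖ ^ 2)]
          refine tsum_congr fun p => ?_
          rw [show TD ξ p = TD ξ (p.1, p.2) from rfl, key]
          rfl
      _ = ∑' z : G, ∑' x : G, ‖TR (η z) x‖ ^ 2 := by
          rw [← (Equiv.prodComm G G).tsum_eq (fun p : G × G => ‖TR (η p.2) p.1‖ ^ 2)]
          exact Summable.tsum_prod hF.prod_symm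
      _ = ∑' z : G, ‖TR (η z)‖ ^ 2 :=
          tsum_congr fun z => (lp_norm_sq (TR (η z))).symm
      _ ≤ ∑' z : G, ‖TR‖ ^ 2 * ‖η z‖ ^ 2 := by
          refine Summable.tsum_le_tsum (fun z => ?_) h1' (h2'.mul_left (‖TR‖ ^ 2))
          rw [← mul_pow]
          exact pow_le_pow_left₀ (norm_nonneg _) (TR.le_opNorm _) 2
      _ = ‖TR‖ ^ 2 * ∑' z : G, ‖η z‖ ^ 2 := tsum_mul_left
      _ = ‖TR‖ ^ 2 * ‖ξ‖ ^ 2 := by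
          rw [lp_norm_sq ξ]
          congr 1
          calc (∑' z : G, ‖η z‖ ^ 2)
              = ∑' z : G, ∑' u : G, ‖ξ (u * z⁻¹, z)‖ ^ 2 := tsum_congr hnη
            _ = ∑' p : G × G, ‖ξ (p.1 * p.2⁻¹, p.2)‖ ^ 2 := by
                rw [← (Equiv.prodComm G G).tsum_eq
                  (fun p : G × G => ‖ξ (p.1 * p.2⁻¹, p.2)‖ ^ 2)]
                exact (Summable.tsum_prod hG.prod_symm).symm
            _ = ∑' p : G × G, ‖ξ p‖ ^ 2 :=
                Equiv.tsum_eq (shearEquiv G).symm (fun p => ‖ξ p‖ ^ 2)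
      _ = (‖TR‖ * ‖ξ‖) ^ 2 := (mul_pow _ _ _).symm
  exact le_of_pow_le_pow_left₀ two_ne_zero (by positivity) hnorm

set_option maxHeartbeats 1000000 in
lemma TR_norm_le {G : Type*} [Group G] (f : G → G → ℂ)
    (TD : lp (fun _ : G × G => ℂ) 2 →L[ℂ] lp (fun _ : G × G => ℂ) 2)
    (hTD : ∀ (ξ : lp (fun _ : G × G => ℂ) 2) (x z : G),
      TD ξ (x, z) = ∑' y : G, f (x * y) (y⁻¹ * z) * ξ (y⁻¹, z))
    (TR : lp (fun _ : G => ℂ) 2 →L[ℂ] lp (fun _ : G => ℂ) 2)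
    (hTR : ∀ (c : lp (fun _ : G => ℂ) 2) (x : G),
      TR c x = ∑' y : G, f (x * y⁻¹) y * c y) :
    ‖TR‖ ≤ ‖TD‖ := by
  classical
  apply TR.opNorm_le_bound (norm_nonneg TD)
  intro c
  have hι : Function.Injective (fun x : G => (x, (1 : G))) := fun a b h => by
    simpa using congrArg Prod.fst h
  have hsupp : ∀ F : G × G → ℝ, (∀ p : G × G, p.2 ≠ 1 → F p = 0) →
      Function.support F ⊆ Set.range (fun x : G => (x, (1 : G))) := by
    intro F hF p hp
    rcases eq_or_ne p.2 1 with h | h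
    · exact ⟨p.1, Prod.ext rfl h.symm⟩
    · exact absurd (hF p h) hp
  obtain ⟨ξ, hξcoe⟩ : ∃ ξ : lp (fun _ : G × G => ℂ) 2,
      ∀ p : G × G, (ξ : G × G → ℂ) p = if p.2 = 1 then c p.1 else 0 := by
    have hsum : Summable fun p : G × G => ‖if p.2 = 1 then c p.1 else (0 : ℂ)‖ ^ 2 := by
      rw [← hι.summable_iff (f := fun p : G × G => ‖if p.2 = 1 then c p.1 else (0 : ℂ)‖ ^ 2)]
      · exact (lp_summable_sq c).congr fun x => by simp
      · intro p hp
        have : p.2 ≠ 1 := fun h => hp ⟨p.1, Prod.ext rfl h.symm⟩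
        simp [this]
    exact ⟨⟨fun p => if p.2 = 1 then c p.1 else 0, memℓp_two_of_summable hsum⟩,
      fun p => rfl⟩
  have hξnorm : ‖ξ‖ = ‖c‖ := by
    have hsq : ‖ξ‖ ^ 2 = ‖c‖ ^ 2 := by
      rw [lp_norm_sq, lp_norm_sq]
      rw [← hι.tsum_eq (f := fun p : G × G => ‖ξ p‖ ^ 2)
        (hsupp _ (fun p hp => by rw [hξcoe]; simp [hp]))]
      exact tsum_congr fun x => by rw [hξcoe]; simp
    rw [← Real.sqrt_sq (norm_nonneg ξ), hsq, Real.sqrt_sq (norm_nonneg c)]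
  have hpt : ∀ p : G × G, TD ξ p = if p.2 = 1 then TR c p.1 else 0 := by
    rintro ⟨x, z⟩
    rw [show TD ξ (x, z) = TD ξ (x, z) from rfl, hTD]
    by_cases hz : z = 1
    · subst hz
      simp only [if_pos rfl]
      rw [hTR]
      rw [← Equiv.tsum_eq (Equiv.inv G) (fun y => f (x * y⁻¹) y * c y)]
      refine tsum_congr fun y => ?_
      simp only [Equiv.inv_apply]
      rw [hξcoe]
      simp
    · simp only [if_neg hz]
      have : ∀ y : G, f (x * y) (y⁻¹ * z) * ξ (y⁻¹, z) = 0 := fun y => by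
        rw [hξcoe]; simp [hz]
      simp [this]
  have hsq : ‖TR c‖ ^ 2 ≤ (‖TD‖ * ‖c‖) ^ 2 := by
    have h1 : ‖TR c‖ ^ 2 = ‖TD ξ‖ ^ 2 := by
      rw [lp_norm_sq, lp_norm_sq]
      rw [← hι.tsum_eq (f := fun p : G × G => ‖TD ξ p‖ ^ 2)
        (hsupp _ (fun p hp => by rw [hpt]; simp [hp]))]
      exact tsum_congr fun x => by rw [hpt]; simp
    rw [h1, ← hξnorm]
    exact pow_le_pow_left₀ (norm_nonneg _) (TD.le_opNorm ξ) 2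
  exact le_of_pow_le_pow_left₀ two_ne_zero (by positivity) hsq

/-- The unitary operator `S` on `ℓ²(G × G)`, `(Sξ)(x,z) = ξ(xz, z)`,
intertwines the amplified canonical representation `R^ω`,
`(R^ω(f)ξ)(x,z) = ∑_y f(y)(y⁻¹x) ξ(y⁻¹x, z)`, and the `D`-regular representation
`(λ^D(f)ξ)(x,z) = ∑_y (T_y f(xy))(z) ξ(y⁻¹, z)`:
`λ^D(f) ∘ S = S ∘ R^ω(f)`; `S` is a bijective isometry of `ℓ²(G×G)`; consequently
`‖λ^D(f)‖ = ‖R(f)‖`, where `R(f)` is the canonical representation on `ℓ²(G)`,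
`(R(f)c)(x) = ∑_y f(xy⁻¹)(y) c(y)`. -/
theorem S_intertwines_and_norms_agree {G : Type*} [Group G]
    (f : G → G → ℂ) (hf : L1norm f < ⊤)
    (TD : lp (fun _ : G × G => ℂ) 2 →L[ℂ] lp (fun _ : G × G => ℂ) 2)
    (hTD : ∀ (ξ : lp (fun _ : G × G => ℂ) 2) (x z : G),
      TD ξ (x, z) = ∑' y : G, f (x * y) (y⁻¹ * z) * ξ (y⁻¹, z))
    (TR : lp (fun _ : G => ℂ) 2 →L[ℂ] lp (fun _ : G => ℂ) 2)
    (hTR : ∀ (c : lp (fun _ : G => ℂ) 2) (x : G),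
      TR c x = ∑' y : G, f (x * y⁻¹) y * c y) :
    -- the intertwining relation λ^D(f) ∘ S = S ∘ R^ω(f), pointwise on functions
    (∀ (ξ : G × G → ℂ) (x z : G),
      (∑' y : G, f (x * y) (y⁻¹ * z) * ξ (y⁻¹ * z, z))
        = ∑' y : G, f y (y⁻¹ * (x * z)) * ξ (y⁻¹ * (x * z), z)) ∧
    -- S is a bijective isometry of ℓ²(G × G)
    Function.Bijective (fun p : G × G => (p.1 * p.2, p.2)) ∧
    (∀ ξ : G × G → ℂ, ∑' p : G × G, ‖ξ (p.1 * p.2, p.2)‖ ^ 2 = ∑' p : G × G, ‖ξ p‖ ^ 2) ∧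
    -- consequently the D-regular and canonical representations have equal norms
    ‖TD‖ = ‖TR‖ := by
  refine ⟨?_, ?_, ?_, ?_⟩
  · intro ξ x z
    rw [← Equiv.tsum_eq (Equiv.mulLeft x)
      (fun y => f y (y⁻¹ * (x * z)) * ξ (y⁻¹ * (x * z), z))]
    refine tsum_congr fun y => ?_
    simp only [Equiv.coe_mulLeft]
    have h : (x * y)⁻¹ * (x * z) = y⁻¹ * z := by
      simp [mul_assoc]
    rw [h]
  · exact (shearEquiv G).bijective
  · intro ξ
    exact Equiv.tsum_eq (shearEquiv G) (fun p => ‖ξ p‖ ^ 2)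
  · exact le_antisymm (TD_norm_le f TD hTD TR hTR) (TR_norm_le f TD hTD TR hTR)
end
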